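/- Let Q ⊆ ℝ^m be a cube and Φ a real-valued function on the set of subcubes of Q that is additive (Φ(H) = Σ_{J∈𝒜} Φ(J) for every cube-partition 𝒜 of a subcube H), Lipschitz (|Φ(I)| ≤ L·V(I) for all subcubes I), and satisfies Φ'(u) = 0 for almost every interior point u of Q (i.e., Φ(I)/V(I) → 0 as cubes I containing u shrink to u). Then Φ is identically 0. -/

import Mathlib

open Set Metric MeasureTheory Topology ENNReal

namespace CubeAux

/-- Center of the `v`-th subcube when subdividing `closedBall c r` in sup-norm into
`K^m` congruent subcubes of radius `r / K`. -/
noncomputable def ctr {m : ℕ} (c : Fin m → ℝ) (r : ℝ) (K : ℕ) (v : Fin m → Fin K) : Fin m → ℝ :=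
  fun i => c i - r + (2 * ((v i : ℕ) : ℝ) + 1) * (r / K)

lemma one_dim {a t r : ℝ} (hr : 0 < r) {K : ℕ} (hK : 0 < K) (h : |t - a| ≤ r) :
    ∃ j : Fin K, |t - (a - r + (2 * ((j : ℕ) : ℝ) + 1) * (r / K))| ≤ r / K := by
  have hK' : (0:ℝ) < K := Nat.cast_pos.2 hK
  set s : ℝ := (t - (a - r)) * K / (2 * r) with hs
  obtain ⟨h1, h2⟩ := abs_le.1 h
  have h0 : 0 ≤ t - (a - r) := by linarith
  have h2r : t - (a - r) ≤ 2 * r := by linarith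
  have hs0 : 0 ≤ s := by positivity
  have hsK : s ≤ K := by
    rw [hs, div_le_iff₀ (by positivity)]
    nlinarith
  set jn : ℕ := min (K - 1) ⌊s⌋₊ with hjn
  have hjnK : jn < K := lt_of_le_of_lt (min_le_left _ _) (by omega)
  refine ⟨⟨jn, hjnK⟩, ?_⟩
  simp only [Fin.val_mk]
  have hj_le : (jn : ℝ) ≤ s := by
    calc (jn : ℝ) ≤ (⌊s⌋₊ : ℝ) := by exact_mod_cast min_le_right _ _
    _ ≤ s := Nat.floor_le hs0
  have hs_le : s ≤ (jn : ℝ) + 1 := by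
    rcases le_or_gt ⌊s⌋₊ (K - 1) with hc | hc
    · have hj : jn = ⌊s⌋₊ := min_eq_right hc
      rw [hj]
      exact (Nat.lt_floor_add_one s).le
    · have hj : jn = K - 1 := min_eq_left hc.le
      have hcast : ((K - 1 : ℕ) : ℝ) + 1 = K := by
        have h1K : (1:ℕ) ≤ K := hK
        push_cast [Nat.cast_sub h1K]
        ring
      rw [hj, hcast]
      exact hsK
  have key : t - (a - r) = s * (2 * r / K) := by
    rw [hs]; field_simp
  have hpos : (0:ℝ) < 2 * r / K := by positivity
  have e1 : (jn:ℝ) * (2 * r / (K:ℝ)) ≤ s * (2 * r / (K:ℝ)) :=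
    mul_le_mul_of_nonneg_right hj_le hpos.le
  have e2 : s * (2 * r / (K:ℝ)) ≤ ((jn:ℝ) + 1) * (2 * r / (K:ℝ)) :=
    mul_le_mul_of_nonneg_right hs_le hpos.le
  have h3 : (jn:ℝ) * (2 * r / (K:ℝ)) = 2 * (jn:ℝ) * (r / (K:ℝ)) := by ring
  have h4 : ((jn:ℝ) + 1) * (2 * r / (K:ℝ)) = 2 * (jn:ℝ) * (r / (K:ℝ)) + 2 * (r / (K:ℝ)) := by
    ring
  rw [abs_le]
  constructor <;> linarith

lemma cover {m : ℕ} (c : Fin m → ℝ) {r : ℝ} (hr : 0 < r) {K : ℕ} (hK : 0 < K) :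
    (⋃ v : Fin m → Fin K, closedBall (ctr c r K v) (r / K)) = closedBall c r := by
  have hK' : (0:ℝ) < K := Nat.cast_pos.2 hK
  have hρ : 0 < r / K := by positivity
  have hKr : (K:ℝ) * (r / K) = r := by field_simp
  apply Subset.antisymm
  · refine iUnion_subset fun v x hx => ?_
    rw [mem_closedBall, dist_pi_le_iff hr.le]
    intro i
    rw [mem_closedBall] at hx
    have h1 : dist (x i) (ctr c r K v i) ≤ r / K :=
      le_trans (dist_le_pi_dist x (ctr c r K v) i) hx
    rw [Real.dist_eq] at h1 ⊢
    have hvi : ((v i : ℕ) : ℝ) ≤ (K:ℝ) - 1 := by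
      have := (v i).isLt
      have : ((v i : ℕ) : ℝ) + 1 ≤ (K:ℝ) := by exact_mod_cast Nat.succ_le_of_lt this
      linarith
    have hvi0 : (0:ℝ) ≤ ((v i : ℕ) : ℝ) := Nat.cast_nonneg _
    unfold ctr at h1
    rw [abs_le] at h1 ⊢
    obtain ⟨ha, hb⟩ := h1
    constructor
    · nlinarith [mul_nonneg hvi0 hρ.le]
    · nlinarith [mul_le_mul_of_nonneg_right hvi hρ.le]
  · intro x hx
    rw [mem_closedBall, dist_pi_le_iff hr.le] at hx
    have hdim : ∀ i, ∃ j : Fin K,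
        |x i - (c i - r + (2 * ((j : ℕ) : ℝ) + 1) * (r / K))| ≤ r / K := by
      intro i
      exact one_dim hr hK (by rw [← Real.dist_eq]; exact hx i)
    choose v hv using hdim
    refine mem_iUnion.2 ⟨v, ?_⟩
    rw [mem_closedBall, dist_pi_le_iff hρ.le]
    intro i
    rw [Real.dist_eq]
    exact hv i

lemma disj {m : ℕ} (c : Fin m → ℝ) {r : ℝ} (hr : 0 < r) {K : ℕ} (hK : 0 < K)
    {v w : Fin m → Fin K} (hvw : v ≠ w) :
    ball (ctr c r K v) (r / K) ∩ ball (ctr c r K w) (r / K) = ∅ := by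
  have hK' : (0:ℝ) < K := Nat.cast_pos.2 hK
  have hρ : 0 < r / K := by positivity
  obtain ⟨i, hi⟩ := Function.ne_iff.1 hvw
  rw [eq_empty_iff_forall_notMem]
  rintro x ⟨hx1, hx2⟩
  rw [mem_ball] at hx1 hx2
  have d1 : |x i - ctr c r K v i| < r / K := by
    rw [← Real.dist_eq]; exact lt_of_le_of_lt (dist_le_pi_dist x _ i) hx1
  have d2 : |x i - ctr c r K w i| < r / K := by
    rw [← Real.dist_eq]; exact lt_of_le_of_lt (dist_le_pi_dist x _ i) hx2
  have hne : (v i : ℕ) ≠ (w i : ℕ) := fun h => hi (Fin.val_injective h)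
  have hone : (1:ℝ) ≤ |((v i : ℕ) : ℝ) - ((w i : ℕ) : ℝ)| := by
    rcases hne.lt_or_gt with h | h
    · have : ((v i : ℕ) : ℝ) + 1 ≤ ((w i : ℕ) : ℝ) := by exact_mod_cast Nat.succ_le_of_lt h
      rw [abs_sub_comm, abs_of_nonneg (by linarith)]
      linarith
    · have : ((w i : ℕ) : ℝ) + 1 ≤ ((v i : ℕ) : ℝ) := by exact_mod_cast Nat.succ_le_of_lt h
      rw [abs_of_nonneg (by linarith)]
      linarith
  have hdiff : ctr c r K v i - ctr c r K w i
      = (((v i : ℕ) : ℝ) - ((w i : ℕ) : ℝ)) * (2 * (r / K)) := by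
    unfold ctr; ring
  have hsep : 2 * (r / K) ≤ |ctr c r K v i - ctr c r K w i| := by
    rw [hdiff, abs_mul, abs_of_pos (by positivity : (0:ℝ) < 2 * (r / K))]
    nlinarith
  have htri : |ctr c r K v i - ctr c r K w i|
      ≤ |ctr c r K v i - x i| + |x i - ctr c r K w i| := abs_sub_le _ _ _
  rw [abs_sub_comm (ctr c r K v i) (x i)] at htri
  linarith

end CubeAux
/-- An additive, Lipschitz cube-function whose derivative vanishes at almost every interior
point of the cube `Q = closedBall q R` (sup-norm, so closed balls are cubes) is identically
zero. A subcube is encoded by its center `c` and its radius `r`; its volume is `(2r)^m`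
and `Φ c r` denotes the value of the cube-function on `closedBall c r`. -/
theorem additive_lipschitz_cube_function_zero {m : ℕ} (q : Fin m → ℝ) (R : ℝ) (hR : 0 < R)
    (Φ : (Fin m → ℝ) → ℝ → ℝ) (L : ℝ)
    -- additivity over cube-partitions of subcubes:
    (hadd : ∀ (c : Fin m → ℝ) (r : ℝ), 0 < r → closedBall c r ⊆ closedBall q R →
      ∀ (n : ℕ) (cs : Fin n → (Fin m → ℝ)) (rs : Fin n → ℝ),
        (∀ i, 0 < rs i) →
        (⋃ i, closedBall (cs i) (rs i)) = closedBall c r →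
        (∀ i j, i ≠ j →
          interior (closedBall (cs i) (rs i)) ∩ interior (closedBall (cs j) (rs j)) = ∅) →
        Φ c r = ∑ i, Φ (cs i) (rs i))
    -- Lipschitz property:
    (hLip : ∀ (c : Fin m → ℝ) (r : ℝ), 0 < r → closedBall c r ⊆ closedBall q R →
      |Φ c r| ≤ L * (2 * r) ^ m)
    -- derivative zero at almost every interior point:
    (hderiv : ∃ N : Set (Fin m → ℝ), volume N = 0 ∧ ∀ u ∈ ball q R \ N,
      ∀ ω > (0 : ℝ), ∃ δ > (0 : ℝ), ball u δ ⊆ closedBall q R ∧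
        ∀ (c : Fin m → ℝ) (r : ℝ), 0 < r → u ∈ closedBall c r → closedBall c r ⊆ ball u δ →
          |Φ c r / (2 * r) ^ m| < ω) :
    ∀ (c : Fin m → ℝ) (r : ℝ), 0 < r → closedBall c r ⊆ closedBall q R → Φ c r = 0 := by
  intro c r hr hsub
  obtain ⟨N, hN0, hN⟩ := hderiv
  have h2r : (0:ℝ) < (2 * r) ^ m := by positivity
  -- it suffices to bound |Φ c r| by ω * (2r)^m for every ω > 0
  suffices hkey : ∀ ω > (0:ℝ), |Φ c r| ≤ ω * (2 * r) ^ m by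
    have habs : |Φ c r| ≤ 0 := by
      by_contra hcon
      push_neg at hcon
      have h1 := hkey (|Φ c r| / (2 * (2 * r) ^ m)) (by positivity)
      have h2 : |Φ c r| / (2 * (2 * r) ^ m) * (2 * r) ^ m = |Φ c r| / 2 := by
        field_simp
      rw [h2] at h1
      linarith
    exact abs_eq_zero.1 (le_antisymm habs (abs_nonneg _))
  intro ω hω
  -- nonnegativity of L
  have hL0 : 0 ≤ L := by
    have h1 := hLip c r hr hsub
    nlinarith [abs_nonneg (Φ c r)]
  -- basic facts about the dyadic scales
  have hKpos : ∀ k : ℕ, 0 < (2:ℕ) ^ k := fun k => Nat.pow_pos (by norm_num)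
  have hKR : ∀ k : ℕ, (0:ℝ) < (((2:ℕ) ^ k : ℕ) : ℝ) := fun k => by
    exact_mod_cast hKpos k
  set ρ : ℕ → ℝ := fun k => r / (((2:ℕ) ^ k : ℕ) : ℝ) with hρdef
  have hρpos : ∀ k, 0 < ρ k := fun k => div_pos hr (hKR k)
  -- every dyadic subcube is contained in the original cube
  have hcb : ∀ (k : ℕ) (v : Fin m → Fin (2 ^ k)),
      closedBall (CubeAux.ctr c r (2 ^ k) v) (ρ k) ⊆ closedBall c r := by
    intro k v
    rw [← CubeAux.cover c hr (hKpos k)]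
    exact subset_iUnion (fun w => closedBall (CubeAux.ctr c r (2 ^ k) w) (r / ((2 ^ k : ℕ) : ℝ))) v
  -- the "bad" subcubes at level k
  set bad : (k : ℕ) → Finset (Fin m → Fin (2 ^ k)) := fun k =>
    Finset.univ.filter (fun v =>
      ¬ |Φ (CubeAux.ctr c r (2 ^ k) v) (ρ k)| ≤ ω * (2 * ρ k) ^ m) with hbaddef
  set E : ℕ → Set (Fin m → ℝ) := fun k =>
    ⋃ v ∈ bad k, ball (CubeAux.ctr c r (2 ^ k) v) (ρ k) with hEdef
  set A : ℕ → Set (Fin m → ℝ) := fun k => ⋃ j, ⋃ (_ : k ≤ j), E j with hAdef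
  have hEopen : ∀ k, IsOpen (E k) := fun k =>
    isOpen_biUnion fun _ _ => isOpen_ball
  have hAopen : ∀ k, IsOpen (A k) := fun k =>
    isOpen_iUnion fun j => isOpen_iUnion fun _ => hEopen j
  have hEsub : ∀ k, E k ⊆ closedBall c r := by
    intro k
    refine iUnion₂_subset fun v _ => ?_
    exact (ball_subset_closedBall).trans (hcb k v)
  have hAsub : ∀ k, A k ⊆ closedBall c r := by
    intro k
    exact iUnion₂_subset fun j _ => hEsub j
  have hvolcb : volume (closedBall c r) ≠ ⊤ := by
    rw [Real.volume_pi_closedBall c hr.le]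
    exact ENNReal.ofReal_ne_top
  have hAfin : ∀ k, volume (A k) ≠ ⊤ := fun k =>
    ne_top_of_le_ne_top hvolcb (measure_mono (hAsub k))
  have hAanti : Antitone A := by
    intro k k' hkk'
    simp only [hAdef]
    exact iUnion₂_subset fun j hj => subset_iUnion₂ (s := fun j (_ : k ≤ j) => E j) j (hkk'.trans hj)
  -- the per-level bound
  have hbound : ∀ k, |Φ c r| ≤ ω * (2 * r) ^ m + L * (volume (A k)).toReal := by
    intro k
    have hKk : 0 < (2:ℕ) ^ k := hKpos k
    have hρk : 0 < ρ k := hρpos k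
    -- additivity over the level-k dyadic subdivision
    have hsum : Φ c r = ∑ v : Fin m → Fin (2 ^ k), Φ (CubeAux.ctr c r (2 ^ k) v) (ρ k) := by
      set e := (Fintype.equivFin (Fin m → Fin (2 ^ k))).symm with hedef
      have h := hadd c r hr hsub (Fintype.card (Fin m → Fin (2 ^ k)))
        (fun i => CubeAux.ctr c r (2 ^ k) (e i)) (fun _ => ρ k) (fun _ => hρk) ?_ ?_
      · rw [h]
        exact Equiv.sum_comp e (fun v => Φ (CubeAux.ctr c r (2 ^ k) v) (ρ k))
      · rw [e.surjective.iUnion_comp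
          (fun v => closedBall (CubeAux.ctr c r (2 ^ k) v) (ρ k))]
        exact CubeAux.cover c hr hKk
      · intro i j hij
        rw [interior_closedBall _ hρk.ne', interior_closedBall _ hρk.ne']
        exact CubeAux.disj c hr hKk (e.injective.ne hij)
    -- split into good and bad subcubes
    have hsplit :
        (∑ v ∈ Finset.univ.filter (fun v =>
            |Φ (CubeAux.ctr c r (2 ^ k) v) (ρ k)| ≤ ω * (2 * ρ k) ^ m),
          |Φ (CubeAux.ctr c r (2 ^ k) v) (ρ k)|)
        + (∑ v ∈ bad k, |Φ (CubeAux.ctr c r (2 ^ k) v) (ρ k)|)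
        = ∑ v : Fin m → Fin (2 ^ k), |Φ (CubeAux.ctr c r (2 ^ k) v) (ρ k)| := by
      rw [hbaddef]
      exact Finset.sum_filter_add_sum_filter_not _ _ _
    have hcard : ((Fintype.card (Fin m → Fin (2 ^ k)) : ℝ)) * (ω * (2 * ρ k) ^ m)
        = ω * (2 * r) ^ m := by
      have hc : Fintype.card (Fin m → Fin (2 ^ k)) = (2 ^ k) ^ m := by
        simp [Fintype.card_fun]
      rw [hc]
      have : ((((2:ℕ) ^ k) ^ m : ℕ) : ℝ) = (((2:ℕ) ^ k : ℕ) : ℝ) ^ m := by push_cast; ring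
      rw [this, hρdef]
      have hpow : ((((2:ℕ) ^ k : ℕ)) : ℝ) ^ m * (2 * (r / (((2:ℕ) ^ k : ℕ) : ℝ))) ^ m
          = (2 * r) ^ m := by
        rw [← mul_pow]
        congr 1
        field_simp
      calc (((2:ℕ) ^ k : ℕ) : ℝ) ^ m * (ω * (2 * (r / (((2:ℕ) ^ k : ℕ) : ℝ))) ^ m)
          = ω * ((((2:ℕ) ^ k : ℕ) : ℝ) ^ m * (2 * (r / (((2:ℕ) ^ k : ℕ) : ℝ))) ^ m) := by ring
        _ = ω * (2 * r) ^ m := by rw [hpow]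
    -- bound the good part
    have hgood : (∑ v ∈ Finset.univ.filter (fun v =>
          |Φ (CubeAux.ctr c r (2 ^ k) v) (ρ k)| ≤ ω * (2 * ρ k) ^ m),
        |Φ (CubeAux.ctr c r (2 ^ k) v) (ρ k)|) ≤ ω * (2 * r) ^ m := by
      calc (∑ v ∈ Finset.univ.filter (fun v =>
            |Φ (CubeAux.ctr c r (2 ^ k) v) (ρ k)| ≤ ω * (2 * ρ k) ^ m),
          |Φ (CubeAux.ctr c r (2 ^ k) v) (ρ k)|)
          ≤ ∑ v ∈ Finset.univ.filter (fun v =>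
            |Φ (CubeAux.ctr c r (2 ^ k) v) (ρ k)| ≤ ω * (2 * ρ k) ^ m),
            (ω * (2 * ρ k) ^ m) := by
            refine Finset.sum_le_sum fun v hv => ?_
            exact (Finset.mem_filter.1 hv).2
        _ ≤ ∑ _v : Fin m → Fin (2 ^ k), (ω * (2 * ρ k) ^ m) := by
            refine Finset.sum_le_sum_of_subset_of_nonneg (Finset.filter_subset _ _) ?_
            intro v _ _
            positivity
        _ = ((Fintype.card (Fin m → Fin (2 ^ k)) : ℝ)) * (ω * (2 * ρ k) ^ m) := by
            rw [Finset.sum_const, Finset.card_univ, nsmul_eq_mul]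
        _ = ω * (2 * r) ^ m := hcard
    -- bound the bad part
    have hbadLip : (∑ v ∈ bad k, |Φ (CubeAux.ctr c r (2 ^ k) v) (ρ k)|)
        ≤ L * ∑ v ∈ bad k, (2 * ρ k) ^ m := by
      rw [Finset.mul_sum]
      refine Finset.sum_le_sum fun v _ => ?_
      exact hLip _ _ hρk ((hcb k v).trans hsub)
    -- the bad volume bound
    have hbadvol : (∑ v ∈ bad k, (2 * ρ k) ^ m) ≤ (volume (A k)).toReal := by
      have hdisj : (↑(bad k) : Set (Fin m → Fin (2 ^ k))).PairwiseDisjoint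
          (fun v => ball (CubeAux.ctr c r (2 ^ k) v) (ρ k)) := by
        intro v _ w _ hvw
        rw [Function.onFun]
        exact Set.disjoint_iff_inter_eq_empty.2 (CubeAux.disj c hr hKk hvw)
      have hmeas : volume (⋃ v ∈ bad k, ball (CubeAux.ctr c r (2 ^ k) v) (ρ k))
          = ∑ v ∈ bad k, volume (ball (CubeAux.ctr c r (2 ^ k) v) (ρ k)) :=
        measure_biUnion_finset hdisj (fun _ _ => measurableSet_ball)
      have hballvol : ∀ v : Fin m → Fin (2 ^ k),
          volume (ball (CubeAux.ctr c r (2 ^ k) v) (ρ k))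
            = ENNReal.ofReal ((2 * ρ k) ^ m) := by
        intro v
        rw [Real.volume_pi_ball _ hρk, Fintype.card_fin]
      have hsumvol : volume (E k) = ENNReal.ofReal (∑ v ∈ bad k, (2 * ρ k) ^ m) := by
        rw [hEdef]
        simp only
        rw [hmeas]
        rw [ENNReal.ofReal_sum_of_nonneg (fun v _ => by positivity)]
        exact Finset.sum_congr rfl fun v _ => hballvol v
      have hle : ENNReal.ofReal (∑ v ∈ bad k, (2 * ρ k) ^ m) ≤ volume (A k) := by
        rw [← hsumvol]
        refine measure_mono ?_
        simp only [hAdef]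
        exact subset_iUnion₂ (s := fun j (_ : k ≤ j) => E j) k le_rfl
      rw [ENNReal.ofReal_le_iff_le_toReal (hAfin k)] at hle
      exact hle
    -- combine
    have habs : |Φ c r| ≤ ∑ v : Fin m → Fin (2 ^ k), |Φ (CubeAux.ctr c r (2 ^ k) v) (ρ k)| := by
      rw [hsum]
      exact Finset.abs_sum_le_sum_abs _ _
    have hmul : L * ∑ v ∈ bad k, (2 * ρ k) ^ m ≤ L * (volume (A k)).toReal :=
      mul_le_mul_of_nonneg_left hbadvol hL0
    linarith [hsplit, hgood, hbadLip, habs, hmul]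
  -- the intersection of the A k is null
  have hInull : volume (⋂ k, A k) = 0 := by
    have hIsub : (⋂ k, A k) ⊆ N ∪ (closedBall q R \ ball q R) := by
      intro u hu
      have huA : ∀ k, u ∈ A k := fun k => mem_iInter.1 hu k
      have huQ : u ∈ closedBall q R := hsub (hAsub 0 (huA 0))
      by_contra hnot
      rw [mem_union] at hnot
      push_neg at hnot
      have huN : u ∉ N := hnot.1
      have huball : u ∈ ball q R := by
        by_contra hb
        exact hnot.2 ⟨huQ, hb⟩
      obtain ⟨δ, hδ, hballsub, hsmall⟩ := hN u ⟨huball, huN⟩ ω hω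
      obtain ⟨k0, hk0⟩ : ∃ k0 : ℕ, 2 * r / (((2:ℕ) ^ k0 : ℕ) : ℝ) < δ := by
        obtain ⟨n, hn⟩ := pow_unbounded_of_one_lt (R := ℝ) (2 * r / δ) one_lt_two
        refine ⟨n, ?_⟩
        have h2n : (0:ℝ) < (((2:ℕ) ^ n : ℕ) : ℝ) := hKR n
        rw [div_lt_iff₀ h2n]
        rw [div_lt_iff₀ hδ] at hn
        have : ((2:ℝ)) ^ n = (((2:ℕ) ^ n : ℕ) : ℝ) := by push_cast; ring
        nlinarith [hn, this]
      obtain ⟨j, hjk0, hjE⟩ : ∃ j, k0 ≤ j ∧ u ∈ E j := by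
        have := huA k0
        simp only [hAdef] at this
        simp only [mem_iUnion] at this
        obtain ⟨j, hj, hE⟩ := this
        exact ⟨j, hj, hE⟩
      rw [hEdef] at hjE
      simp only [mem_iUnion] at hjE
      obtain ⟨v, hvbad, huball'⟩ := hjE
      have hρj : 0 < ρ j := hρpos j
      have hρmono : ρ j ≤ ρ k0 := by
        rw [hρdef]
        apply div_le_div_of_nonneg_left hr.le (hKR k0)
        exact_mod_cast Nat.pow_le_pow_right (by norm_num) hjk0
      have hucb : u ∈ closedBall (CubeAux.ctr c r (2 ^ j) v) (ρ j) :=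
        ball_subset_closedBall huball'
      have hcbsub : closedBall (CubeAux.ctr c r (2 ^ j) v) (ρ j) ⊆ ball u δ := by
        intro x hx
        rw [mem_closedBall] at hx
        rw [mem_ball]
        rw [mem_ball] at huball'
        calc dist x u ≤ dist x (CubeAux.ctr c r (2 ^ j) v)
              + dist (CubeAux.ctr c r (2 ^ j) v) u := dist_triangle _ _ _
          _ < ρ j + ρ j := by
              rw [dist_comm (CubeAux.ctr c r (2 ^ j) v) u]
              exact add_lt_add_of_le_of_lt hx huball'
          _ ≤ δ := by
              have h2ρ : 2 * ρ k0 < δ := by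
                have he : 2 * ρ k0 = 2 * r / (((2:ℕ) ^ k0 : ℕ) : ℝ) := by
                  rw [hρdef]; ring
                rw [he]; exact hk0
              linarith
      have hcontr := hsmall (CubeAux.ctr c r (2 ^ j) v) (ρ j) hρj hucb hcbsub
      have hbadv : ¬ |Φ (CubeAux.ctr c r (2 ^ j) v) (ρ j)| ≤ ω * (2 * ρ j) ^ m := by
        rw [hbaddef] at hvbad
        exact (Finset.mem_filter.1 hvbad).2
      have hpowpos : (0:ℝ) < (2 * ρ j) ^ m := by positivity
      rw [abs_div, abs_of_pos hpowpos, div_lt_iff₀ hpowpos] at hcontr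
      exact hbadv (le_of_lt (by linarith [hcontr]))
    have hsphere : volume (closedBall q R \ ball q R) = 0 := by
      rw [measure_diff ball_subset_closedBall measurableSet_ball.nullMeasurableSet
        (by rw [Real.volume_pi_ball q hR]; exact ENNReal.ofReal_ne_top)]
      rw [Real.volume_pi_closedBall q hR.le, Real.volume_pi_ball q hR]
      exact tsub_self _
    have : volume (⋂ k, A k) ≤ volume N + volume (closedBall q R \ ball q R) :=
      le_trans (measure_mono hIsub) (measure_union_le _ _)
    rw [hN0, hsphere] at this
    simpa using this
  -- pass to the limit
  have htend : Filter.Tendsto (fun k => volume (A k)) Filter.atTop (𝓝 0) := by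
    have h := tendsto_measure_iInter_atTop (μ := volume)
      (fun k => ((hAopen k).measurableSet).nullMeasurableSet) hAanti ⟨0, hAfin 0⟩
    rw [hInull] at h
    exact h
  have htendR : Filter.Tendsto (fun k => (volume (A k)).toReal) Filter.atTop (𝓝 0) := by
    have := (ENNReal.tendsto_toReal (by norm_num : (0:ℝ≥0∞) ≠ ⊤)).comp htend
    simpa [Function.comp_def] using this
  have htendF : Filter.Tendsto (fun k => ω * (2 * r) ^ m + L * (volume (A k)).toReal)
      Filter.atTop (𝓝 (ω * (2 * r) ^ m + L * 0)) := by
    exact Filter.Tendsto.const_add _ (htendR.const_mul L)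
  have hfin : |Φ c r| ≤ ω * (2 * r) ^ m + L * 0 :=
    ge_of_tendsto' htendF hbound
  linarith [hfin]
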